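/- Let G be a graph on ten vertices such that both G and its complement are minimally t-imperfect, with the standard 10-vertex labeling. If u_iu_{i+1} is an edge of G for every i = 1,…,5 (indices mod 5), then U induces exactly the 5-cycle u1u2u3u4u5 (no chords), and G is (3,3)-partitionable. -/

import Mathlib

open SimpleGraph

namespace TP

/-- A set of vertices is independent: no two of its vertices are adjacent. -/
def IsIndep {V : Type*} (G : SimpleGraph V) (S : Set V) : Prop :=
  S.Pairwise fun u v => ¬ G.Adj u v

/-- The finite vertex set `s` induces a cycle of length `n` in `G`. -/
def IsInducedCycle {V : Type*} (G : SimpleGraph V) (n : ℕ) (s : Finset V) : Prop :=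
  3 ≤ n ∧ s.card = n ∧ Nonempty (G.induce (s : Set V) ≃g SimpleGraph.cycleGraph n)

/-- The polytope `P(G)` given by nonnegativity, edge and odd-cycle inequalities. -/
def tPolytope {V : Type*} [Fintype V] (G : SimpleGraph V) : Set (V → ℝ) :=
  {x | (∀ v, 0 ≤ x v ∧ x v ≤ 1) ∧
    (∀ ⦃u v⦄, G.Adj u v → x u + x v ≤ 1) ∧
    (∀ (n : ℕ) (s : Finset V), Odd n → IsInducedCycle G n s →
      ∑ v ∈ s, x v ≤ ((n : ℝ) - 1) / 2)}

/-- The independent set polytope: the convex hull of characteristic vectors of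
independent sets. -/
def stabPolytope {V : Type*} [Fintype V] (G : SimpleGraph V) : Set (V → ℝ) :=
  convexHull ℝ {x | ∃ S : Set V, IsIndep G S ∧ x = S.indicator fun _ => (1 : ℝ)}

/-- A graph is t-perfect if `P(G)` equals its independent set polytope. -/
def TPerfect {V : Type*} [Fintype V] (G : SimpleGraph V) : Prop :=
  tPolytope G = stabPolytope G

/-- The graph obtained from `G` by a t-contraction at `v` : the closed neighbourhood
of `v` is replaced by a single new vertex (`none`), adjacent to every vertex that had
a neighbour in the closed neighbourhood of `v`. -/
def tContract {V : Type*} (G : SimpleGraph V) (v : V) :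
    SimpleGraph (Option {w : V // w ≠ v ∧ ¬ G.Adj v w}) :=
  SimpleGraph.fromRel fun a b =>
    match a, b with
    | some a, some b => G.Adj a.1 b.1
    | some a, none => ∃ x, (x = v ∨ G.Adj v x) ∧ G.Adj a.1 x
    | none, _ => False

/-- A bundled finite simple graph. -/
structure FinGraph : Type 1 where
  V : Type
  [fintype : Fintype V]
  graph : SimpleGraph V

attribute [instance] FinGraph.fintype

def FinGraph.of {V : Type} [Fintype V] (G : SimpleGraph V) : FinGraph :=
  FinGraph.mk V G

/-- `B` is obtained from `A` by deleting one vertex (up to isomorphism). -/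
def DeleteStep (A B : FinGraph) : Prop :=
  ∃ v : A.V, Nonempty (B.graph ≃g A.graph.induce {w | w ≠ v})

/-- `B` is obtained from `A` by a t-contraction at a vertex whose neighbourhood is
independent (up to isomorphism). -/
def ContractStep (A B : FinGraph) : Prop :=
  ∃ v : A.V, IsIndep A.graph (A.graph.neighborSet v) ∧
    Nonempty (B.graph ≃g tContract A.graph v)

/-- One step: a vertex deletion or a t-contraction. -/
def Step (A B : FinGraph) : Prop := DeleteStep A B ∨ ContractStep A B

/-- `TMinor B A` : `B` is a t-minor of `A`, i.e. obtained from `A` by a sequence of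
vertex deletions and t-contractions. -/
def TMinor (B A : FinGraph) : Prop := Relation.ReflTransGen Step A B

/-- `B` is a proper t-minor of `A` : a t-minor with fewer vertices. -/
def ProperTMinor (B A : FinGraph) : Prop :=
  TMinor B A ∧ Fintype.card B.V < Fintype.card A.V

/-- A graph is minimally t-imperfect if it is not t-perfect but every proper t-minor
of it is t-perfect. -/
def MinimallyTImperfect {V : Type} [Fintype V] (G : SimpleGraph V) : Prop :=
  ¬ TPerfect G ∧ ∀ B : FinGraph, ProperTMinor B (FinGraph.of G) → TPerfect B.graph

/-- A core graph: every proper t-minor of `G` and every proper t-minor of its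
complement is t-perfect. -/
def IsCore {V : Type} [Fintype V] (G : SimpleGraph V) : Prop :=
  (∀ B : FinGraph, ProperTMinor B (FinGraph.of G) → TPerfect B.graph) ∧
  (∀ B : FinGraph, ProperTMinor B (FinGraph.of Gᶜ) → TPerfect B.graph)

/-- A partition of `V \ {v}` into `count` sets of size `size`, all satisfying `P`. -/
def CoverOff {V : Type*} (v : V) (count size : ℕ) (P : Finset V → Prop) : Prop :=
  ∃ f : Fin count → Finset V,
    (∀ i, P (f i) ∧ (f i).card = size) ∧
    (∀ i j, i ≠ j → Disjoint (f i) (f j)) ∧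
    (∀ i, v ∉ f i) ∧
    (∀ w, w ≠ v → ∃ i, w ∈ f i)

/-- `(p,q)`-partitionable graphs. -/
def PQPartitionable {V : Type*} [Fintype V] (G : SimpleGraph V) (p q : ℕ) : Prop :=
  2 ≤ p ∧ 2 ≤ q ∧ Fintype.card V = p * q + 1 ∧
  ∀ v : V,
    CoverOff v q p (fun S => IsIndep G (S : Set V)) ∧
    CoverOff v p q (fun S => G.IsClique (S : Set V))

/-- `G` has an odd hole: an induced odd cycle of length at least five. -/
def HasOddHole {V : Type*} (G : SimpleGraph V) : Prop :=
  ∃ (n : ℕ) (s : Finset V), Odd n ∧ 5 ≤ n ∧ IsInducedCycle G n s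

/-- A graph is perfect iff neither it nor its complement has an odd hole. -/
def GPerfect {V : Type*} (G : SimpleGraph V) : Prop :=
  ¬ HasOddHole G ∧ ¬ HasOddHole Gᶜ

/-- Every vertex has degree at least three and at most five. -/
def DegreeBounded {V : Type*} (G : SimpleGraph V) : Prop :=
  ∀ v, 3 ≤ (G.neighborSet v).ncard ∧ (G.neighborSet v).ncard ≤ 5

/-- The `n`-wheel: an `n`-cycle plus a vertex (`none`) adjacent to every cycle vertex. -/
def wheel (n : ℕ) : SimpleGraph (Option (Fin n)) :=
  SimpleGraph.fromRel fun a b =>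
    match a, b with
    | some i, some j => (SimpleGraph.cycleGraph n).Adj i j
    | none, some _ => True
    | _, none => False

/-- Vertex type of the standard 9-vertex labeling: `inl i` is `v_{i+1}`,
`inr j` is `u_{j+1}`. -/
abbrev V9 := Fin 5 ⊕ Fin 4

/-- Vertex type of the standard 10-vertex labeling. -/
abbrev V10 := Fin 5 ⊕ Fin 5

/-- The standard 9-vertex labeling: `v1 … v5` form a 5-hole; the neighbours of `u_i`
among the `v`'s are `v_{i+2}` and `v_{i+3}` together possibly with `v_i`. -/
def Std9 (G : SimpleGraph V9) : Prop :=
  (∀ i j : Fin 5, G.Adj (.inl i) (.inl j) ↔ (j = i + 1 ∨ i = j + 1)) ∧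
  (∀ (i : Fin 4) (k : Fin 5), G.Adj (.inr i) (.inl k) →
    k = i.castSucc + 2 ∨ k = i.castSucc + 3 ∨ k = i.castSucc) ∧
  (∀ i : Fin 4, G.Adj (.inr i) (.inl (i.castSucc + 2)) ∧ G.Adj (.inr i) (.inl (i.castSucc + 3)))

/-- The standard 10-vertex labeling. -/
def Std10 (G : SimpleGraph V10) : Prop :=
  (∀ i j : Fin 5, G.Adj (.inl i) (.inl j) ↔ (j = i + 1 ∨ i = j + 1)) ∧
  (∀ (i k : Fin 5), G.Adj (.inr i) (.inl k) → k = i + 2 ∨ k = i + 3 ∨ k = i) ∧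
  (∀ i : Fin 5, G.Adj (.inr i) (.inl (i + 2)) ∧ G.Adj (.inr i) (.inl (i + 3)))

/-- The 9-vertex graph of the standard labeling with prescribed `U`-edges and
prescribed extra edges `u_i v_i`. -/
def graph9 (uEdges : List (Fin 4 × Fin 4)) (extra : List (Fin 4)) : SimpleGraph V9 :=
  SimpleGraph.fromRel fun a b =>
    match a, b with
    | .inl i, .inl j => j = i + 1
    | .inr i, .inl k => k = i.castSucc + 2 ∨ k = i.castSucc + 3 ∨ (i ∈ extra ∧ k = i.castSucc)
    | .inl _, .inr _ => False
    | .inr i, .inr j => (i, j) ∈ uEdges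

/-- The 10-vertex graph of the standard labeling with prescribed `U`-edges and
prescribed extra edges `u_i v_i`. -/
def graph10 (uEdges : List (Fin 5 × Fin 5)) (extra : List (Fin 5)) : SimpleGraph V10 :=
  SimpleGraph.fromRel fun a b =>
    match a, b with
    | .inl i, .inl j => j = i + 1
    | .inr i, .inl k => k = i + 2 ∨ k = i + 3 ∨ (i ∈ extra ∧ k = i)
    | .inl _, .inr _ => False
    | .inr i, .inr j => (i, j) ∈ uEdges

/-- The graph `(12°435°1)`. -/
def G12435 : SimpleGraph V10 :=
  graph10 [(0,1),(1,3),(3,2),(2,4),(4,0)] [1,4]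

/-- The graph `(1°2°435°1°)`. -/
def G12435' : SimpleGraph V10 :=
  graph10 [(0,1),(1,3),(3,2),(2,4),(4,0)] [0,1,4]



/-! ### Auxiliary machinery for `stmt14` -/

/-- Certificate for t-imperfection: a linear functional bounded by `M` on all
independent-set indicators, but exceeding `3 M` in total weight. -/
theorem not_tPerfect_of_cert {W : Type*} [Fintype W] (H : SimpleGraph W) (w : W → ℝ)
    (M : ℝ)
    (hM : ∀ S : Set W, IsIndep H S →
      (∑ v, w v * S.indicator (fun _ => (1 : ℝ)) v) ≤ M)
    (hgt : 3 * M < ∑ v, w v) : ¬ TPerfect H := by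
  intro htp
  have hx : (fun _ => (1 : ℝ)/3) ∈ tPolytope H := by
    refine ⟨fun v => by norm_num, fun u v _ => by norm_num, ?_⟩
    intro n s _ hc
    obtain ⟨h3, hcard, -⟩ := hc
    have h3' : (3 : ℝ) ≤ (n : ℝ) := by exact_mod_cast h3
    have : ∑ _v ∈ s, (1 : ℝ)/3 = (n : ℝ)/3 := by
      rw [Finset.sum_const, hcard, nsmul_eq_mul]; ring
    rw [this]; linarith
  rw [htp] at hx
  have hsub : stabPolytope H ⊆ {y : W → ℝ | ∑ v, w v * y v ≤ M} := by
    apply convexHull_min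
    · rintro y ⟨S, hS, rfl⟩; exact hM S hS
    · intro y hy z hz a b ha hb hab
      simp only [Set.mem_setOf_eq] at *
      have : ∑ v, w v * (a • y + b • z) v
          = a * (∑ v, w v * y v) + b * (∑ v, w v * z v) := by
        rw [Finset.mul_sum, Finset.mul_sum, ← Finset.sum_add_distrib]
        refine Finset.sum_congr rfl fun v _ => by simp [Pi.add_apply]; ring
      rw [this]
      calc a * (∑ v, w v * y v) + b * (∑ v, w v * z v)
          ≤ a * M + b * M := by
            apply add_le_add <;> apply mul_le_mul_of_nonneg_left <;> assumption
        _ = M := by rw [← add_mul, hab, one_mul]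
  have hin := hsub hx
  simp only [Set.mem_setOf_eq] at hin
  have hsum : ∑ v, w v * ((1:ℝ)/3) = (∑ v, w v) / 3 := by
    rw [Finset.sum_div]; exact Finset.sum_congr rfl fun v _ => by ring
  rw [hsum] at hin
  linarith

/-- Specialized certificate: 7 or more vertices but no independent set of size 3. -/
theorem not_tPerfect_of_alpha_two {W : Type*} [Fintype W] (H : SimpleGraph W)
    (hα : ∀ S : Set W, IsIndep H S → ∀ a b c : W,
      a ∈ S → b ∈ S → c ∈ S → (a = b ∨ a = c ∨ b = c))
    (hcard : 7 ≤ Fintype.card W) : ¬ TPerfect H := by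
  refine not_tPerfect_of_cert H (fun _ => (1:ℝ)/2) 1 ?_ ?_
  · intro S hS
    haveI : DecidablePred (· ∈ S) := fun _ => Classical.propDecidable _
    have hcard2 : (Finset.univ.filter (· ∈ S)).card ≤ 2 := by
      by_contra hgt2
      push_neg at hgt2
      obtain ⟨a, ha, b, hb, c, hc, hab, hac, hbc⟩ := Finset.two_lt_card.mp hgt2
      rcases hα S hS a b c (Finset.mem_filter.mp ha).2 (Finset.mem_filter.mp hb).2
        (Finset.mem_filter.mp hc).2 with h | h | h
      · exact hab h
      · exact hac h
      · exact hbc h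
    have hterm : ∀ v : W,
        (1/2 : ℝ) * S.indicator (fun _ => (1:ℝ)) v = if v ∈ S then (1/2 : ℝ) else 0 := by
      intro v
      by_cases h : v ∈ S
      · simp [Set.indicator_of_mem, h]
      · simp [Set.indicator_of_notMem, h]
    calc ∑ v, (1/2 : ℝ) * S.indicator (fun _ => (1:ℝ)) v
        = ∑ v, if v ∈ S then (1/2 : ℝ) else 0 :=
          Finset.sum_congr rfl fun v _ => hterm v
      _ = ∑ _v ∈ Finset.univ.filter (· ∈ S), (1/2 : ℝ) := (Finset.sum_filter _ _).symm
      _ = ((Finset.univ.filter (· ∈ S)).card : ℝ) * (1/2) := by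
          rw [Finset.sum_const, nsmul_eq_mul]
      _ ≤ 2 * (1/2) := by
          have : ((Finset.univ.filter (· ∈ S)).card : ℝ) ≤ 2 := by exact_mod_cast hcard2
          nlinarith
      _ = 1 := by norm_num
  · rw [Finset.sum_const, nsmul_eq_mul, Finset.card_univ]
    have : (7 : ℝ) ≤ (Fintype.card W : ℝ) := by exact_mod_cast hcard
    nlinarith

/-- congruence iso for `induce`. -/
def induceCongr {V : Type*} (G : SimpleGraph V) {A B : Set V} (h : A = B) :
    G.induce A ≃g G.induce B := by subst h; exact Iso.refl

/-- iso between induce on an erased finset and a nested induce. -/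
def induceEraseIso {V : Type} [DecidableEq V] (G : SimpleGraph V) (s : Finset V)
    (v : V) (hv : v ∈ s) :
    G.induce ↑(s.erase v) ≃g (G.induce ↑s).induce {w : ↑(↑s : Set V) | w ≠ ⟨v, hv⟩} where
  toFun x := ⟨⟨x.1, Finset.mem_of_mem_erase x.2⟩,
    fun h => (Finset.mem_erase.mp x.2).1 (congrArg Subtype.val h)⟩
  invFun y := ⟨y.1.1, Finset.mem_erase.mpr ⟨fun h => y.2 (Subtype.ext h), y.1.2⟩⟩
  left_inv _ := rfl
  right_inv _ := rfl
  map_rel_iff' := Iff.rfl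

lemma deleteStep_top {V : Type} [Fintype V] [DecidableEq V] (G : SimpleGraph V) (v : V) :
    DeleteStep (FinGraph.of G) (FinGraph.of (G.induce ↑(Finset.univ.erase v))) :=
  ⟨v, ⟨induceCongr G (by
    ext w
    simp only [Finset.coe_erase, Finset.coe_univ, Set.mem_diff, Set.mem_univ, true_and,
      Set.mem_singleton_iff, Set.mem_setOf_eq]
    exact Iff.rfl)⟩⟩

lemma deleteStep_erase {V : Type} [Fintype V] [DecidableEq V] (G : SimpleGraph V)
    (s : Finset V) (v : V) (hv : v ∈ s) :
    DeleteStep (FinGraph.of (G.induce ↑s)) (FinGraph.of (G.induce ↑(s.erase v))) :=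
  ⟨⟨v, hv⟩, ⟨induceEraseIso G s v hv⟩⟩

lemma tminor_induce_aux {V : Type} [Fintype V] [DecidableEq V] (G : SimpleGraph V) :
    ∀ (k : ℕ) (t : Finset V), (Finset.univ \ t).card = k + 1 →
      TMinor (FinGraph.of (G.induce ↑t)) (FinGraph.of G) := by
  intro k
  induction k with
  | zero =>
    intro t ht
    obtain ⟨v, hv⟩ := Finset.card_eq_one.mp ht
    have htv : t = Finset.univ.erase v := by
      ext w
      constructor
      · intro hw
        refine Finset.mem_erase.mpr ⟨?_, Finset.mem_univ w⟩
        rintro rfl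
        have : w ∈ Finset.univ \ t := hv ▸ Finset.mem_singleton_self w
        exact (Finset.mem_sdiff.mp this).2 hw
      · intro hw
        by_contra hwt
        have : w ∈ Finset.univ \ t := Finset.mem_sdiff.mpr ⟨Finset.mem_univ w, hwt⟩
        rw [hv, Finset.mem_singleton] at this
        exact (Finset.mem_erase.mp hw).1 this
    rw [htv]
    exact Relation.ReflTransGen.single (Or.inl (deleteStep_top G v))
  | succ k ih =>
    intro t ht
    have hne : (Finset.univ \ t).Nonempty := by
      rw [← Finset.card_pos, ht]; omega
    obtain ⟨v, hv⟩ := hne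
    have hvt : v ∉ t := (Finset.mem_sdiff.mp hv).2
    have hins : (Finset.univ \ insert v t).card = k + 1 := by
      rw [Finset.sdiff_insert, Finset.card_erase_of_mem hv, ht]; omega
    have step := deleteStep_erase G (insert v t) v (Finset.mem_insert_self v t)
    rw [Finset.erase_insert hvt] at step
    exact (ih (insert v t) hins).tail (Or.inl step)

lemma tminor_induce {V : Type} [Fintype V] [DecidableEq V] (G : SimpleGraph V)
    (s : Finset V) (hne : s ≠ Finset.univ) :
    ProperTMinor (FinGraph.of (G.induce ↑s)) (FinGraph.of G) := by
  have hlt : s.card < Fintype.card V := by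
    rw [← Finset.card_univ]
    exact Finset.card_lt_card (lt_of_le_of_ne (Finset.subset_univ s) hne)
  constructor
  · have hk : (Finset.univ \ s).card = (Finset.univ \ s).card - 1 + 1 := by
      have : 0 < (Finset.univ \ s).card := by
        rw [Finset.card_sdiff_of_subset (Finset.subset_univ s), Finset.card_univ]; omega
      omega
    exact tminor_induce_aux G _ s hk
  · show Fintype.card ((s : Set V)) < Fintype.card V
    rw [← Set.toFinset_card, Finset.toFinset_coe]; exact hlt

/-- guaranteed edges of the standard labeling (without chords or `u_i v_i`). -/
def loB : V10 → V10 → Bool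
  | .inl i, .inl j => j = i + 1 || i = j + 1
  | .inr i, .inl k => k = i + 2 || k = i + 3
  | .inl k, .inr i => k = i + 2 || k = i + 3
  | .inr i, .inr j => j = i + 1 || i = j + 1

/-- guaranteed edges plus the chord `u_c u_{c+2}`. -/
def loC (c : Fin 5) (x y : V10) : Bool :=
  loB x y || (x = .inr c && y = .inr (c + 2)) || (y = .inr c && x = .inr (c + 2))

/-- possible edges of the standard labeling assuming no `U`-chords. -/
def upB : V10 → V10 → Bool
  | .inl i, .inl j => j = i + 1 || i = j + 1
  | .inr i, .inl k => k = i + 2 || k = i + 3 || k = i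
  | .inl k, .inr i => k = i + 2 || k = i + 3 || k = i
  | .inr i, .inr j => j = i + 1 || i = j + 1

/-- the 7-vertex subset witnessing t-imperfection when the chord `u_i u_{i+2}` exists. -/
def sF (i : Fin 5) : Finset V10 :=
  {.inl i, .inl (i+1), .inl (i+2), .inr i, .inr (i+2), .inr (i+3), .inr (i+4)}

lemma sF_card : ∀ i : Fin 5, (sF i).card = 7 := by decide

lemma sF_ne_univ : ∀ i : Fin 5, sF i ≠ Finset.univ := by decide

set_option synthInstance.maxSize 1000 in
lemma sF_tri : ∀ (i : Fin 5) (a b c : V10), a ∈ sF i → b ∈ sF i → c ∈ sF i →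
    a ≠ b → a ≠ c → b ≠ c → (loC i a b || loC i a c || loC i b c) = true := by decide

section Abs

variable {G : SimpleGraph V10} (hstd : Std10 G)
  (hall : ∀ i : Fin 5, G.Adj (.inr i) (.inr (i + 1)))

include hstd hall in
lemma h_lo : ∀ x y, loB x y = true → G.Adj x y := by
  rintro (i|i) (j|j) h <;> simp only [loB, Bool.or_eq_true, decide_eq_true_eq] at h
  · exact (hstd.1 i j).mpr h
  · rcases h with rfl | rfl
    · exact ((hstd.2.2 j).1).symm
    · exact ((hstd.2.2 j).2).symm
  · rcases h with rfl | rfl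
    · exact (hstd.2.2 i).1
    · exact (hstd.2.2 i).2
  · rcases h with rfl | rfl
    · exact hall i
    · exact (hall j).symm

include hstd hall in
lemma h_loC (c : Fin 5) (hc : G.Adj (.inr c) (.inr (c + 2))) :
    ∀ x y, loC c x y = true → G.Adj x y := by
  intro x y h
  simp only [loC, Bool.or_eq_true, Bool.and_eq_true, decide_eq_true_eq] at h
  rcases h with (h | ⟨rfl, rfl⟩) | ⟨rfl, rfl⟩
  · exact h_lo hstd hall x y h
  · exact hc
  · exact hc.symm

include hstd in
lemma h_up (hnc : ∀ i : Fin 5, ¬ G.Adj (.inr i) (.inr (i + 2))) :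
    ∀ x y, G.Adj x y → upB x y = true := by
  rintro (i|i) (j|j) h <;>
    simp only [upB, Bool.or_eq_true, decide_eq_true_eq]
  · exact (hstd.1 i j).mp h
  · rcases hstd.2.1 j i h.symm with h' | h' | h' <;> tauto
  · rcases hstd.2.1 i j h with h' | h' | h' <;> tauto
  · have hne : i ≠ j := by rintro rfl; exact G.irrefl h
    have key : ∀ a b : Fin 5, a ≠ b → (b = a + 1 ∨ a = b + 1 ∨ b = a + 2 ∨ a = b + 2) := by
      decide
    rcases key i j hne with h' | h' | h' | h'
    · tauto
    · tauto
    · exact absurd (h' ▸ h) (hnc i)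
    · exact absurd (h' ▸ h).symm (hnc j)

include hstd in
lemma isIndep_of_up (hnc : ∀ i : Fin 5, ¬ G.Adj (.inr i) (.inr (i + 2)))
    (S : Finset V10) (h : ∀ a ∈ S, ∀ b ∈ S, a ≠ b → upB a b = false) :
    IsIndep G (S : Set V10) := by
  intro a ha b hb hne hadj
  have := h_up hstd hnc a b hadj
  rw [h a (Finset.mem_coe.mp ha) b (Finset.mem_coe.mp hb) hne] at this
  exact Bool.false_ne_true this

include hstd hall in
lemma isClique_of_lo (S : Finset V10) (h : ∀ a ∈ S, ∀ b ∈ S, a ≠ b → loB a b = true) :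
    G.IsClique (S : Set V10) := fun a ha b hb hne =>
  h_lo hstd hall a b (h a (Finset.mem_coe.mp ha) b (Finset.mem_coe.mp hb) hne)

end Abs

/-- Assembling a `CoverOff` from three explicit triples. -/
lemma coverOff_of (v : V10) (A B C : Finset V10) (P : Finset V10 → Prop)
    (hPA : P A) (hPB : P B) (hPC : P C)
    (hc : A.card = 3 ∧ B.card = 3 ∧ C.card = 3)
    (hd : Disjoint A B ∧ Disjoint A C ∧ Disjoint B C)
    (hv : v ∉ A ∧ v ∉ B ∧ v ∉ C)
    (hcov : ∀ w : V10, w ≠ v → (w ∈ A ∨ w ∈ B ∨ w ∈ C)) :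
    CoverOff v 3 3 P := by
  refine ⟨![A, B, C], ?_, ?_, ?_, ?_⟩
  · intro i
    fin_cases i
    · exact ⟨hPA, hc.1⟩
    · exact ⟨hPB, hc.2.1⟩
    · exact ⟨hPC, hc.2.2⟩
  · intro i j hij
    fin_cases i <;> fin_cases j <;>
      first
        | exact absurd rfl hij
        | exact hd.1 | exact hd.1.symm
        | exact hd.2.1 | exact hd.2.1.symm
        | exact hd.2.2 | exact hd.2.2.symm
  · intro i
    fin_cases i
    · exact hv.1
    · exact hv.2.1
    · exact hv.2.2
  · intro w hw
    rcases hcov w hw with h | h | h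
    · exact ⟨0, h⟩
    · exact ⟨1, h⟩
    · exact ⟨2, h⟩


set_option maxHeartbeats 1000000 in
/-- if both `G` and its complement are minimally t-imperfect (standard
10-vertex labeling) and all edges `u_iu_{i+1}` are present, then `U` induces exactly
the 5-cycle and `G` is (3,3)-partitionable. -/
theorem stmt14 (G : SimpleGraph V10)
    (hG : MinimallyTImperfect G) (hGc : MinimallyTImperfect Gᶜ)
    (hstd : Std10 G)
    (hall : ∀ i : Fin 5, G.Adj (.inr i) (.inr (i + 1))) :
    (∀ i j : Fin 5, G.Adj (.inr i) (.inr j) ↔ (j = i + 1 ∨ i = j + 1)) ∧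
    PQPartitionable G 3 3 := by
  -- Step 1: no chords in U
  have hnochord : ∀ i : Fin 5, ¬ G.Adj (.inr i) (.inr (i + 2)) := by
    intro i hchord
    have hpm := tminor_induce G (sF i) (sF_ne_univ i)
    have htp := hG.2 _ hpm
    refine not_tPerfect_of_alpha_two _ ?_ ?_ htp
    · intro S hS a b c haS hbS hcS
      by_contra hne
      push_neg at hne
      obtain ⟨hab, hac, hbc⟩ := hne
      have hab1 : a.1 ≠ b.1 := fun h => hab (Subtype.ext h)
      have hac1 : a.1 ≠ c.1 := fun h => hac (Subtype.ext h)
      have hbc1 : b.1 ≠ c.1 := fun h => hbc (Subtype.ext h)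
      have tri := sF_tri i a.1 b.1 c.1 (Finset.mem_coe.mp a.2) (Finset.mem_coe.mp b.2)
        (Finset.mem_coe.mp c.2) hab1 hac1 hbc1
      simp only [Bool.or_eq_true] at tri
      rcases tri with (h | h) | h
      · exact hS haS hbS hab (h_loC hstd hall i hchord _ _ h)
      · exact hS haS hcS hac (h_loC hstd hall i hchord _ _ h)
      · exact hS hbS hcS hbc (h_loC hstd hall i hchord _ _ h)
    · have hcardW : Fintype.card ↑((sF i : Finset V10) : Set V10) = 7 := by
        rw [← Set.toFinset_card, Finset.toFinset_coe]; exact sF_card i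
      exact ((Fintype.card_congr (Equiv.refl _)).trans hcardW).ge
  have huadj : ∀ i j : Fin 5, G.Adj (.inr i) (.inr j) ↔ (j = i + 1 ∨ i = j + 1) := by
    intro i j
    constructor
    · intro h
      have := h_up hstd hnochord _ _ h
      simpa only [upB, Bool.or_eq_true, decide_eq_true_eq] using this
    · rintro (rfl | rfl)
      · exact hall i
      · exact (hall j).symm
  have IND := isIndep_of_up hstd hnochord
  have CLQ := isClique_of_lo hstd hall
  refine ⟨huadj, by norm_num, by norm_num, by decide, ?_⟩
  intro v
  match v with
  | .inl 0 =>
    exact ⟨coverOff_of _ {(.inl 1), (.inl 4), (.inr 0)} {(.inl 2), (.inr 1), (.inr 3)} {(.inl 3), (.inr 2), (.inr 4)} _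
        (IND _ (by decide)) (IND _ (by decide)) (IND _ (by decide))
        (by decide) (by decide) (by decide) (by decide),
      coverOff_of _ {(.inl 1), (.inr 3), (.inr 4)} {(.inl 2), (.inl 3), (.inr 0)} {(.inl 4), (.inr 1), (.inr 2)} _
        (CLQ _ (by decide)) (CLQ _ (by decide)) (CLQ _ (by decide))
        (by decide) (by decide) (by decide) (by decide)⟩
  | .inl 1 =>
    exact ⟨coverOff_of _ {(.inl 0), (.inl 2), (.inr 1)} {(.inl 3), (.inr 2), (.inr 4)} {(.inl 4), (.inr 0), (.inr 3)} _
        (IND _ (by decide)) (IND _ (by decide)) (IND _ (by decide))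
        (by decide) (by decide) (by decide) (by decide),
      coverOff_of _ {(.inl 0), (.inr 2), (.inr 3)} {(.inl 2), (.inr 0), (.inr 4)} {(.inl 3), (.inl 4), (.inr 1)} _
        (CLQ _ (by decide)) (CLQ _ (by decide)) (CLQ _ (by decide))
        (by decide) (by decide) (by decide) (by decide)⟩
  | .inl 2 =>
    exact ⟨coverOff_of _ {(.inl 0), (.inr 1), (.inr 4)} {(.inl 1), (.inl 3), (.inr 2)} {(.inl 4), (.inr 0), (.inr 3)} _
        (IND _ (by decide)) (IND _ (by decide)) (IND _ (by decide))
        (by decide) (by decide) (by decide) (by decide),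
      coverOff_of _ {(.inl 0), (.inl 4), (.inr 2)} {(.inl 1), (.inr 3), (.inr 4)} {(.inl 3), (.inr 0), (.inr 1)} _
        (CLQ _ (by decide)) (CLQ _ (by decide)) (CLQ _ (by decide))
        (by decide) (by decide) (by decide) (by decide)⟩
  | .inl 3 =>
    exact ⟨coverOff_of _ {(.inl 0), (.inr 1), (.inr 4)} {(.inl 1), (.inr 0), (.inr 2)} {(.inl 2), (.inl 4), (.inr 3)} _
        (IND _ (by decide)) (IND _ (by decide)) (IND _ (by decide))
        (by decide) (by decide) (by decide) (by decide),
      coverOff_of _ {(.inl 0), (.inl 1), (.inr 3)} {(.inl 2), (.inr 0), (.inr 4)} {(.inl 4), (.inr 1), (.inr 2)} _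
        (CLQ _ (by decide)) (CLQ _ (by decide)) (CLQ _ (by decide))
        (by decide) (by decide) (by decide) (by decide)⟩
  | .inl 4 =>
    exact ⟨coverOff_of _ {(.inl 0), (.inl 3), (.inr 4)} {(.inl 1), (.inr 0), (.inr 2)} {(.inl 2), (.inr 1), (.inr 3)} _
        (IND _ (by decide)) (IND _ (by decide)) (IND _ (by decide))
        (by decide) (by decide) (by decide) (by decide),
      coverOff_of _ {(.inl 0), (.inr 2), (.inr 3)} {(.inl 1), (.inl 2), (.inr 4)} {(.inl 3), (.inr 0), (.inr 1)} _
        (CLQ _ (by decide)) (CLQ _ (by decide)) (CLQ _ (by decide))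
        (by decide) (by decide) (by decide) (by decide)⟩
  | .inr 0 =>
    exact ⟨coverOff_of _ {(.inl 0), (.inr 1), (.inr 4)} {(.inl 1), (.inl 3), (.inr 2)} {(.inl 2), (.inl 4), (.inr 3)} _
        (IND _ (by decide)) (IND _ (by decide)) (IND _ (by decide))
        (by decide) (by decide) (by decide) (by decide),
      coverOff_of _ {(.inl 0), (.inr 2), (.inr 3)} {(.inl 1), (.inl 2), (.inr 4)} {(.inl 3), (.inl 4), (.inr 1)} _
        (CLQ _ (by decide)) (CLQ _ (by decide)) (CLQ _ (by decide))
        (by decide) (by decide) (by decide) (by decide)⟩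
  | .inr 1 =>
    exact ⟨coverOff_of _ {(.inl 0), (.inl 3), (.inr 4)} {(.inl 1), (.inr 0), (.inr 2)} {(.inl 2), (.inl 4), (.inr 3)} _
        (IND _ (by decide)) (IND _ (by decide)) (IND _ (by decide))
        (by decide) (by decide) (by decide) (by decide),
      coverOff_of _ {(.inl 0), (.inl 4), (.inr 2)} {(.inl 1), (.inr 3), (.inr 4)} {(.inl 2), (.inl 3), (.inr 0)} _
        (CLQ _ (by decide)) (CLQ _ (by decide)) (CLQ _ (by decide))
        (by decide) (by decide) (by decide) (by decide)⟩
  | .inr 2 =>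
    exact ⟨coverOff_of _ {(.inl 0), (.inl 3), (.inr 4)} {(.inl 1), (.inl 4), (.inr 0)} {(.inl 2), (.inr 1), (.inr 3)} _
        (IND _ (by decide)) (IND _ (by decide)) (IND _ (by decide))
        (by decide) (by decide) (by decide) (by decide),
      coverOff_of _ {(.inl 0), (.inl 1), (.inr 3)} {(.inl 2), (.inr 0), (.inr 4)} {(.inl 3), (.inl 4), (.inr 1)} _
        (CLQ _ (by decide)) (CLQ _ (by decide)) (CLQ _ (by decide))
        (by decide) (by decide) (by decide) (by decide)⟩
  | .inr 3 =>
    exact ⟨coverOff_of _ {(.inl 0), (.inl 2), (.inr 1)} {(.inl 1), (.inl 4), (.inr 0)} {(.inl 3), (.inr 2), (.inr 4)} _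
        (IND _ (by decide)) (IND _ (by decide)) (IND _ (by decide))
        (by decide) (by decide) (by decide) (by decide),
      coverOff_of _ {(.inl 0), (.inl 4), (.inr 2)} {(.inl 1), (.inl 2), (.inr 4)} {(.inl 3), (.inr 0), (.inr 1)} _
        (CLQ _ (by decide)) (CLQ _ (by decide)) (CLQ _ (by decide))
        (by decide) (by decide) (by decide) (by decide)⟩
  | .inr 4 =>
    exact ⟨coverOff_of _ {(.inl 0), (.inl 2), (.inr 1)} {(.inl 1), (.inl 3), (.inr 2)} {(.inl 4), (.inr 0), (.inr 3)} _
        (IND _ (by decide)) (IND _ (by decide)) (IND _ (by decide))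
        (by decide) (by decide) (by decide) (by decide),
      coverOff_of _ {(.inl 0), (.inl 1), (.inr 3)} {(.inl 2), (.inl 3), (.inr 0)} {(.inl 4), (.inr 1), (.inr 2)} _
        (CLQ _ (by decide)) (CLQ _ (by decide)) (CLQ _ (by decide))
        (by decide) (by decide) (by decide) (by decide)⟩

end TP
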